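/- Let (X,d) be a compact Ahlfors regular metric space and let C ⊆ X be a nonempty compact set. Then for all t with lb-dim C < t < ub-dim C, the covering regularity exponent satisfies p_t(C) ≤ ((lb-dim C)/t) · (ub-dim X − t)/(ub-dim X − lb-dim C). -/

import Mathlib

open Set Filter Topology Metric MeasureTheory

/-- Minimum number of sets of diameter at most `δ` needed to cover `F`. -/
noncomputable def coverN {X : Type*} [MetricSpace X] (F : Set X) (δ : ℝ) : ℕ :=
  sInf {n : ℕ | ∃ U : Fin n → Set X, (∀ i, EMetric.diam (U i) ≤ ENNReal.ofReal δ) ∧ F ⊆ ⋃ i, U i}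

/-- Lower box dimension. -/
noncomputable def lbDim {X : Type*} [MetricSpace X] (F : Set X) : ℝ :=
  Filter.liminf (fun δ : ℝ => Real.log (coverN F δ) / (-Real.log δ)) (𝓝[>] 0)

/-- Upper box dimension. -/
noncomputable def ubDim {X : Type*} [MetricSpace X] (F : Set X) : ℝ :=
  Filter.limsup (fun δ : ℝ => Real.log (coverN F δ) / (-Real.log δ)) (𝓝[>] 0)

/-- The `(t,δ)`-covering regularity exponent `p_{t,δ}(C)`. -/
noncomputable def cre {X : Type*} [MetricSpace X] (C : Set X) (t δ : ℝ) : ℝ :=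
  sSup {p : ℝ | 0 ≤ p ∧ p ≤ 1 ∧ δ ^ (-(p * t)) ≤ (coverN C (δ ^ p) : ℝ)}

/-- The `t`-covering regularity exponent `p_t(C)`. -/
noncomputable def creT {X : Type*} [MetricSpace X] (C : Set X) (t : ℝ) : ℝ :=
  Filter.liminf (fun δ : ℝ => cre C t δ) (𝓝[>] 0)

section helpers

set_option linter.unusedSectionVars false
set_option linter.unusedVariables false

variable {X : Type*} [MetricSpace X] [CompactSpace X]

lemma ediam_ball_le (x : X) {r : ℝ} (hr : 0 ≤ r) :
    EMetric.diam (Metric.ball x r) ≤ ENNReal.ofReal (2 * r) := by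
  rw [← Metric.emetric_ball, ENNReal.ofReal_mul (by norm_num : (0:ℝ) ≤ 2)]
  simpa [EMetric.diam] using EMetric.diam_ball (x := x) (r := ENNReal.ofReal r)

lemma coverN_set_nonempty (F : Set X) {δ : ℝ} (hδ : 0 < δ) :
    {n : ℕ | ∃ U : Fin n → Set X, (∀ i, EMetric.diam (U i) ≤ ENNReal.ofReal δ) ∧
      F ⊆ ⋃ i, U i}.Nonempty := by
  obtain ⟨t, -, htfin, htcov⟩ :=
    (isCompact_univ : IsCompact (Set.univ : Set X)).finite_cover_balls (e := δ / 2)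
      (by linarith)
  classical
  let s := htfin.toFinset
  refine ⟨s.card, fun i => Metric.ball (s.equivFin.symm i) (δ / 2), fun i => ?_, ?_⟩
  · refine (ediam_ball_le _ (by linarith)).trans ?_
    rw [show 2 * (δ / 2) = δ by ring]
  · intro x _
    have hx : x ∈ ⋃ y ∈ t, Metric.ball y (δ / 2) := htcov (mem_univ x)
    simp only [mem_iUnion] at hx ⊢
    obtain ⟨y, hy, hxy⟩ := hx
    have hy' : y ∈ s := htfin.mem_toFinset.2 hy
    exact ⟨s.equivFin ⟨y, hy'⟩, by simpa using hxy⟩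

lemma coverN_spec (F : Set X) {δ : ℝ} (hδ : 0 < δ) :
    ∃ U : Fin (coverN F δ) → Set X, (∀ i, EMetric.diam (U i) ≤ ENNReal.ofReal δ) ∧
      F ⊆ ⋃ i, U i :=
  Nat.sInf_mem (coverN_set_nonempty F hδ)

lemma coverN_pos {C : Set X} (hne : C.Nonempty) {δ : ℝ} (hδ : 0 < δ) :
    0 < coverN C δ := by
  rcases Nat.eq_zero_or_pos (coverN C δ) with h | h
  · exfalso
    obtain ⟨U, -, hcov⟩ := coverN_spec C hδ
    have hemp : IsEmpty (Fin (coverN C δ)) := by rw [h]; infer_instance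
    obtain ⟨x, hx⟩ := hne
    obtain ⟨i, -⟩ := mem_iUnion.1 (hcov hx)
    exact hemp.elim i
  · exact h

lemma coverN_mono_set {F G : Set X} (h : F ⊆ G) {δ : ℝ} (hδ : 0 < δ) :
    coverN F δ ≤ coverN G δ := by
  obtain ⟨U, hdiam, hcov⟩ := coverN_spec G hδ
  exact Nat.sInf_le ⟨U, hdiam, h.trans hcov⟩

lemma coverN_anti {F : Set X} {δ₁ δ₂ : ℝ} (h1 : 0 < δ₁) (h : δ₁ ≤ δ₂) :
    coverN F δ₂ ≤ coverN F δ₁ := by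
  obtain ⟨U, hdiam, hcov⟩ := coverN_spec F h1
  exact Nat.sInf_le ⟨U, fun i => (hdiam i).trans (ENNReal.ofReal_le_ofReal h), hcov⟩

lemma coverN_union_le (A B : Set X) {δ : ℝ} (hδ : 0 < δ) :
    coverN (A ∪ B) δ ≤ coverN A δ + coverN B δ := by
  obtain ⟨U, hU, hUc⟩ := coverN_spec A hδ
  obtain ⟨V, hV, hVc⟩ := coverN_spec B hδ
  refine Nat.sInf_le ⟨fun i => Sum.elim U V (finSumFinEquiv.symm i), fun i => ?_, ?_⟩
  · rcases hs : (finSumFinEquiv.symm i) with j | j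
    · simp only [hs, Sum.elim_inl]; exact hU j
    · simp only [hs, Sum.elim_inr]; exact hV j
  · intro x hx
    rcases hx with hx | hx
    · obtain ⟨i, hi⟩ := mem_iUnion.1 (hUc hx)
      exact mem_iUnion.2 ⟨finSumFinEquiv (Sum.inl i), by simpa using hi⟩
    · obtain ⟨i, hi⟩ := mem_iUnion.1 (hVc hx)
      exact mem_iUnion.2 ⟨finSumFinEquiv (Sum.inr i), by simpa using hi⟩

lemma coverN_biUnion_le {ι : Type*} (s : Finset ι) (A : ι → Set X) {δ : ℝ} (hδ : 0 < δ) :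
    coverN (⋃ i ∈ s, A i) δ ≤ ∑ i ∈ s, coverN (A i) δ := by
  classical
  induction s using Finset.induction_on with
  | empty =>
      simp only [Finset.notMem_empty, iUnion_of_empty, iUnion_empty, Finset.sum_empty]
      exact Nat.sInf_le ⟨Fin.elim0, fun i => i.elim0, by simp⟩
  | insert _ _ hni ih =>
      rename_i a s'
      rw [Finset.set_biUnion_insert, Finset.sum_insert hni]
      exact (coverN_union_le _ _ hδ).trans (Nat.add_le_add le_rfl ih)

end helpers

section packing

open scoped ENNReal NNReal

set_option linter.unusedSectionVars false

variable {X : Type*} [MetricSpace X] [CompactSpace X]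
  [MeasurableSpace X] [BorelSpace X]

lemma coverN_mul_le_measure (μ : Measure X) {E : Set X} {σ : ℝ} (hσ : 0 < σ)
    {a b : ℝ≥0∞} (ha : 0 < a) (hb : b ≠ ⊤)
    (hlow : ∀ x : X, a ≤ μ (Metric.ball x (σ / 4)))
    (hup : μ (⋃ x ∈ E, Metric.ball x ((σ / 4))) ≤ b) :
    (coverN E σ : ℝ≥0∞) * a ≤ b := by
  classical
  set P : Set (Set X) := {T | T ⊆ E ∧ ∀ x ∈ T, ∀ y ∈ T, x ≠ y → σ / 2 ≤ dist x y} with hP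
  obtain ⟨T, hTmax⟩ := zorn_subset P (by
    intro c hcP hchain
    refine ⟨⋃₀ c, ⟨?_, ?_⟩, fun s hs => subset_sUnion_of_mem hs⟩
    · exact sUnion_subset fun s hs => (hcP hs).1
    · rintro x hx y hy hxy
      obtain ⟨s₁, hs₁, hxs₁⟩ := hx
      obtain ⟨s₂, hs₂, hys₂⟩ := hy
      rcases hchain.total hs₁ hs₂ with h | h
      · exact (hcP hs₂).2 x (h hxs₁) y hys₂ hxy
      · exact (hcP hs₁).2 x hxs₁ y (h hys₂) hxy)
  have hTP : T ∈ P := hTmax.prop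
  have hTE : T ⊆ E := hTP.1
  -- the balls of radius σ/4 around points of T are pairwise disjoint
  have hdisj : Pairwise (Function.onFun Disjoint fun t : T => Metric.ball (t : X) (σ / 4)) := by
    rintro ⟨t, ht⟩ ⟨t', ht'⟩ hne
    have htt' : (t : X) ≠ t' := fun h => hne (by simpa using h)
    have := hTP.2 t ht t' ht' htt'
    exact Metric.ball_disjoint_ball (by linarith)
  -- T is finite
  have hTfin : T.Finite := by
    have hfin : Set.Finite {i : T | a ≤ μ (Metric.ball (i : X) (σ / 4))} := by
      refine Measure.finite_const_le_meas_of_disjoint_iUnion μ ha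
        (fun i => measurableSet_ball) hdisj ?_
      refine ne_top_of_le_ne_top hb (le_trans (measure_mono ?_) hup)
      rintro x ⟨s, ⟨i, rfl⟩, hxs⟩
      exact mem_biUnion (hTE i.2) hxs
    have : {i : T | a ≤ μ (Metric.ball (i : X) (σ / 4))} = univ := by
      ext i; simpa using hlow (i : X)
    rw [this] at hfin
    exact Set.finite_coe_iff.1 (Set.finite_univ_iff.1 hfin)
  -- maximality: T is σ/2-dense in E
  have hcov : E ⊆ ⋃ t ∈ T, Metric.ball t (σ / 2) := by
    intro x hx
    by_contra hxcov
    have hfar : ∀ t ∈ T, σ / 2 ≤ dist x t := by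
      intro t ht
      by_contra hlt
      push_neg at hlt
      exact hxcov (mem_biUnion ht (by simpa [Metric.mem_ball, dist_comm] using hlt))
    have hxT : x ∉ T := by
      intro hxT
      have := hfar x hxT
      simp only [dist_self] at this
      linarith
    have hins : insert x T ∈ P := by
      constructor
      · exact insert_subset hx hTE
      · rintro y (rfl | hy) z (rfl | hz) hyz
        · exact absurd rfl hyz
        · exact hfar z hz
        · rw [dist_comm]; exact hfar y hy
        · exact hTP.2 y hy z hz hyz
    have := hTmax.2 hins (subset_insert x T) (mem_insert x T)
    exact hxT this
  -- counting
  set F := hTfin.toFinset with hF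
  have hcard : coverN E σ ≤ F.card := by
    refine Nat.sInf_le ⟨fun i => Metric.ball (F.equivFin.symm i : X) (σ / 2),
      fun i => ?_, ?_⟩
    · refine (ediam_ball_le _ (by linarith)).trans ?_
      rw [show 2 * (σ / 2) = σ by ring]
    · intro x hx
      obtain ⟨t, ht, hxt⟩ := mem_iUnion₂.1 (hcov hx)
      have ht' : t ∈ F := hTfin.mem_toFinset.2 ht
      exact mem_iUnion.2 ⟨F.equivFin ⟨t, ht'⟩, by simpa using hxt⟩
  have hsum : (F.card : ℝ≥0∞) * a ≤ b := by
    have h1 : (F.card : ℝ≥0∞) * a = ∑ t ∈ F, a := by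
      rw [Finset.sum_const, nsmul_eq_mul]
    have h2 : ∑ t ∈ F, a ≤ ∑ t ∈ F, μ (Metric.ball t (σ / 4)) :=
      Finset.sum_le_sum fun t _ => hlow t
    have h3 : ∑ t ∈ F, μ (Metric.ball t (σ / 4)) = μ (⋃ t ∈ F, Metric.ball t (σ / 4)) := by
      refine (measure_biUnion_finset ?_ fun t _ => measurableSet_ball).symm
      intro t ht t' ht' hne
      have ht2 : t ∈ T := hTfin.mem_toFinset.1 ht
      have ht2' : t' ∈ T := hTfin.mem_toFinset.1 ht'
      exact Metric.ball_disjoint_ball (by linarith [hTP.2 t ht2 t' ht2' hne])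
    have h4 : μ (⋃ t ∈ F, Metric.ball t (σ / 4)) ≤ b := by
      refine le_trans (measure_mono ?_) hup
      rintro x ⟨s, ⟨t, rfl⟩, hxs⟩
      simp only [mem_iUnion, exists_prop] at hxs ⊢
      obtain ⟨ht, hxt⟩ := hxs
      exact ⟨t, hTE (hTfin.mem_toFinset.1 ht), hxt⟩
    calc (F.card : ℝ≥0∞) * a = ∑ t ∈ F, a := h1
      _ ≤ _ := h2
      _ = _ := h3
      _ ≤ b := h4
  calc (coverN E σ : ℝ≥0∞) * a ≤ (F.card : ℝ≥0∞) * a := by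
        exact mul_le_mul_left (by exact_mod_cast hcard) a
    _ ≤ b := hsum

end packing

section ahlfors

open scoped ENNReal NNReal

set_option linter.unusedSectionVars false

variable {X : Type*} [MetricSpace X] [CompactSpace X]
  [MeasurableSpace X] [BorelSpace X]
  {dH lam : ℝ}

/-- Per-piece covering estimate from Ahlfors regularity. -/
lemma coverN_piece_le (hdH : 0 ≤ dH) (hlam : 0 < lam)
    (hreg : ∀ (x : X) (ρ : ℝ), 0 < ρ → ρ ≤ Metric.diam (Set.univ : Set X) →
      ENNReal.ofReal (lam⁻¹ * ρ ^ dH) ≤ μH[dH] (Metric.ball x ρ) ∧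
      μH[dH] (Metric.ball x ρ) ≤ ENNReal.ofReal (lam * ρ ^ dH))
    {E : Set X} {σ δ₀ : ℝ} (hσ : 0 < σ) (hσδ : σ ≤ δ₀)
    (hδd : 2 * δ₀ ≤ Metric.diam (Set.univ : Set X))
    (hEdiam : EMetric.diam E ≤ ENNReal.ofReal δ₀) :
    (coverN E σ : ℝ) ≤ lam ^ 2 * 8 ^ dH * (δ₀ / σ) ^ dH := by
  have hδ₀ : 0 < δ₀ := lt_of_lt_of_le hσ hσδ
  have hM0 : 0 < lam ^ 2 * 8 ^ dH * (δ₀ / σ) ^ dH := by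
    have h8 : (0:ℝ) < 8 ^ dH := Real.rpow_pos_of_pos (by norm_num) _
    have hq : (0:ℝ) < (δ₀ / σ) ^ dH := Real.rpow_pos_of_pos (by positivity) _
    positivity
  rcases E.eq_empty_or_nonempty with rfl | ⟨x₀, hx₀⟩
  · have : coverN (∅ : Set X) σ = 0 := by
      refine Nat.le_zero.1 (Nat.sInf_le ⟨Fin.elim0, fun i => i.elim0, by simp⟩)
    rw [this]; exact_mod_cast hM0.le
  have ha : (0:ℝ≥0∞) < ENNReal.ofReal (lam⁻¹ * (σ / 4) ^ dH) := by
    refine ENNReal.ofReal_pos.2 ?_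
    have : (0:ℝ) < (σ / 4) ^ dH := Real.rpow_pos_of_pos (by linarith) _
    positivity
  have key : (coverN E σ : ℝ≥0∞) * ENNReal.ofReal (lam⁻¹ * (σ / 4) ^ dH) ≤
      ENNReal.ofReal (lam * (2 * δ₀) ^ dH) := by
    refine coverN_mul_le_measure (μH[dH]) hσ ha ENNReal.ofReal_ne_top ?_ ?_
    · intro x
      exact (hreg x (σ / 4) (by linarith) (by linarith)).1
    · have hsub : (⋃ x ∈ E, Metric.ball x (σ / 4)) ⊆ Metric.ball x₀ (2 * δ₀) := by
        rintro y hy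
        obtain ⟨x, hxE, hxy⟩ := mem_iUnion₂.1 hy
        have hd : dist x x₀ ≤ δ₀ := by
          rw [← edist_le_ofReal hδ₀.le]
          exact le_trans (EMetric.edist_le_diam_of_mem hxE hx₀) hEdiam
        have : dist y x₀ ≤ dist y x + dist x x₀ := dist_triangle _ _ _
        rw [Metric.mem_ball] at hxy ⊢
        have : dist y x₀ < σ / 4 + δ₀ := by linarith [dist_triangle y x x₀]
        linarith
      exact le_trans (measure_mono hsub)
        (hreg x₀ (2 * δ₀) (by linarith) hδd).2
  -- convert to a real inequality
  have hNa : ((coverN E σ : ℝ) * (lam⁻¹ * (σ / 4) ^ dH)) ≤ lam * (2 * δ₀) ^ dH := by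
    have := key
    rw [show (coverN E σ : ℝ≥0∞) = ENNReal.ofReal (coverN E σ : ℝ) by
          rw [ENNReal.ofReal_natCast],
        ← ENNReal.ofReal_mul (by positivity)] at this
    have hb0 : (0:ℝ) ≤ lam * (2 * δ₀) ^ dH := by
      have : (0:ℝ) < (2*δ₀) ^ dH := Real.rpow_pos_of_pos (by linarith) _
      positivity
    exact (ENNReal.ofReal_le_ofReal_iff hb0).1 this
  have hapos : (0:ℝ) < lam⁻¹ * (σ / 4) ^ dH := by
    have : (0:ℝ) < (σ / 4) ^ dH := Real.rpow_pos_of_pos (by linarith) _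
    positivity
  rw [← le_div_iff₀ hapos] at hNa
  refine hNa.trans (le_of_eq ?_)
  have hs4 : ((σ/4:ℝ)) ^ dH ≠ 0 := (Real.rpow_pos_of_pos (by linarith) _).ne'
  have hl : lam ≠ 0 := hlam.ne'
  have e1 : ((2*δ₀)/(σ/4) : ℝ) = 8 * (δ₀/σ) := by field_simp; ring
  have e2 : ((2*δ₀) : ℝ) ^ dH / (σ/4) ^ dH = 8 ^ dH * (δ₀/σ) ^ dH := by
    rw [← Real.div_rpow (by linarith) (by linarith), e1,
      Real.mul_rpow (by norm_num) (by positivity)]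
  calc lam * (2*δ₀) ^ dH / (lam⁻¹ * (σ/4) ^ dH)
      = lam ^ 2 * ((2*δ₀) ^ dH / (σ/4) ^ dH) := by field_simp
    _ = lam ^ 2 * 8 ^ dH * (δ₀ / σ) ^ dH := by rw [e2]; ring

/-- Interpolation of covering numbers via Ahlfors regularity. -/
lemma coverN_interp (hdH : 0 ≤ dH) (hlam : 0 < lam)
    (hreg : ∀ (x : X) (ρ : ℝ), 0 < ρ → ρ ≤ Metric.diam (Set.univ : Set X) →
      ENNReal.ofReal (lam⁻¹ * ρ ^ dH) ≤ μH[dH] (Metric.ball x ρ) ∧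
      μH[dH] (Metric.ball x ρ) ≤ ENNReal.ofReal (lam * ρ ^ dH))
    (C : Set X) {σ δ₀ : ℝ} (hσ : 0 < σ) (hσδ : σ ≤ δ₀)
    (hδd : 2 * δ₀ ≤ Metric.diam (Set.univ : Set X)) :
    (coverN C σ : ℝ) ≤ (coverN C δ₀ : ℝ) * (lam ^ 2 * 8 ^ dH * (δ₀ / σ) ^ dH) := by
  classical
  have hδ₀ : 0 < δ₀ := lt_of_lt_of_le hσ hσδ
  obtain ⟨U, hUd, hUc⟩ := coverN_spec C hδ₀
  have hsub : C ⊆ ⋃ i ∈ (Finset.univ : Finset (Fin (coverN C δ₀))), (U i ∩ C) := by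
    intro x hx
    obtain ⟨i, hi⟩ := mem_iUnion.1 (hUc hx)
    exact mem_biUnion (Finset.mem_univ i) ⟨hi, hx⟩
  have h1 : coverN C σ ≤ ∑ i : Fin (coverN C δ₀), coverN (U i ∩ C) σ :=
    le_trans (coverN_mono_set hsub hσ) (coverN_biUnion_le _ _ hσ)
  have h2 : (coverN C σ : ℝ) ≤ ∑ i : Fin (coverN C δ₀), (coverN (U i ∩ C) σ : ℝ) := by
    exact_mod_cast h1
  refine h2.trans ?_
  have h3 : ∀ i : Fin (coverN C δ₀),
      (coverN (U i ∩ C) σ : ℝ) ≤ lam ^ 2 * 8 ^ dH * (δ₀ / σ) ^ dH := fun i =>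
    coverN_piece_le hdH hlam hreg hσ hσδ hδd
      (le_trans (EMetric.diam_mono inter_subset_left) (hUd i))
  refine (Finset.sum_le_sum fun i _ => h3 i).trans (le_of_eq ?_)
  rw [Finset.sum_const, Finset.card_univ, Fintype.card_fin, nsmul_eq_mul]

lemma measure_univ_ne_top (hlam : 0 < lam)
    (hreg : ∀ (x : X) (ρ : ℝ), 0 < ρ → ρ ≤ Metric.diam (Set.univ : Set X) →
      ENNReal.ofReal (lam⁻¹ * ρ ^ dH) ≤ μH[dH] (Metric.ball x ρ) ∧
      μH[dH] (Metric.ball x ρ) ≤ ENNReal.ofReal (lam * ρ ^ dH))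
    (hdiam : 0 < Metric.diam (Set.univ : Set X)) :
    μH[dH] (Set.univ : Set X) ≠ ⊤ := by
  classical
  obtain ⟨t, -, htfin, htcov⟩ :=
    (isCompact_univ : IsCompact (Set.univ : Set X)).finite_cover_balls
      (e := Metric.diam (Set.univ : Set X)) hdiam
  have h1 : μH[dH] (Set.univ : Set X) ≤
      ∑ y ∈ htfin.toFinset, μH[dH] (Metric.ball y (Metric.diam (Set.univ : Set X))) := by
    refine le_trans (measure_mono ?_) (measure_biUnion_finset_le _ _)
    intro x hx
    obtain ⟨y, hy, hxy⟩ := mem_iUnion₂.1 (htcov hx)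
    exact mem_biUnion (htfin.mem_toFinset.2 hy) hxy
  refine ne_top_of_le_ne_top ?_ (h1.trans (Finset.sum_le_sum fun y _ =>
    (hreg y _ hdiam le_rfl).2))
  simp only [Finset.sum_const, nsmul_eq_mul]
  exact ENNReal.mul_ne_top (by simp) ENNReal.ofReal_ne_top

lemma coverN_univ_upper (hlam : 0 < lam)
    (hreg : ∀ (x : X) (ρ : ℝ), 0 < ρ → ρ ≤ Metric.diam (Set.univ : Set X) →
      ENNReal.ofReal (lam⁻¹ * ρ ^ dH) ≤ μH[dH] (Metric.ball x ρ) ∧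
      μH[dH] (Metric.ball x ρ) ≤ ENNReal.ofReal (lam * ρ ^ dH))
    {σ : ℝ} (hσ : 0 < σ) (hσd : σ ≤ Metric.diam (Set.univ : Set X)) :
    (coverN (Set.univ : Set X) σ : ℝ) * (lam⁻¹ * (σ / 4) ^ dH) ≤
      (μH[dH] (Set.univ : Set X)).toReal := by
  have hdiam : 0 < Metric.diam (Set.univ : Set X) := lt_of_lt_of_le hσ hσd
  have hb := measure_univ_ne_top hlam hreg hdiam
  have key : (coverN (Set.univ : Set X) σ : ℝ≥0∞) * ENNReal.ofReal (lam⁻¹ * (σ / 4) ^ dH) ≤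
      μH[dH] (Set.univ : Set X) := by
    refine coverN_mul_le_measure (μH[dH]) hσ ?_ hb
      (fun x => (hreg x (σ / 4) (by linarith) (by linarith)).1)
      (measure_mono (subset_univ _))
    refine ENNReal.ofReal_pos.2 ?_
    have : (0:ℝ) < (σ / 4) ^ dH := Real.rpow_pos_of_pos (by linarith) _
    positivity
  rw [show (coverN (Set.univ : Set X) σ : ℝ≥0∞) =
        ENNReal.ofReal (coverN (Set.univ : Set X) σ : ℝ) by rw [ENNReal.ofReal_natCast],
      ← ENNReal.ofReal_mul (by positivity)] at key
  exact (ENNReal.ofReal_le_iff_le_toReal hb).1 key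

lemma coverN_univ_lower [Nonempty X] (hlam : 0 < lam)
    (hreg : ∀ (x : X) (ρ : ℝ), 0 < ρ → ρ ≤ Metric.diam (Set.univ : Set X) →
      ENNReal.ofReal (lam⁻¹ * ρ ^ dH) ≤ μH[dH] (Metric.ball x ρ) ∧
      μH[dH] (Metric.ball x ρ) ≤ ENNReal.ofReal (lam * ρ ^ dH))
    {σ : ℝ} (hσ : 0 < σ) (hσd : 2 * σ ≤ Metric.diam (Set.univ : Set X)) :
    lam⁻¹ * (Metric.diam (Set.univ : Set X)) ^ dH ≤
      (coverN (Set.univ : Set X) σ : ℝ) * (lam * (2 * σ) ^ dH) := by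
  classical
  have hdiam : 0 < Metric.diam (Set.univ : Set X) := by linarith
  obtain ⟨U, hUd, hUc⟩ := coverN_spec (Set.univ : Set X) hσ
  have hUb : ∀ i, μH[dH] (U i) ≤ ENNReal.ofReal (lam * (2 * σ) ^ dH) := by
    intro i
    rcases (U i).eq_empty_or_nonempty with h | ⟨x, hx⟩
    · rw [h]; simp
    · refine le_trans (measure_mono ?_) (hreg x (2 * σ) (by linarith) hσd).2
      intro y hy
      have : dist y x ≤ σ := by
        rw [← edist_le_ofReal hσ.le]
        exact le_trans (EMetric.edist_le_diam_of_mem hy hx) (hUd i)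
      exact Metric.mem_ball.2 (by linarith)
  have h1 : μH[dH] (Set.univ : Set X) ≤
      (coverN (Set.univ : Set X) σ : ℝ≥0∞) * ENNReal.ofReal (lam * (2 * σ) ^ dH) := by
    refine le_trans (measure_mono hUc) (le_trans (measure_iUnion_le U) ?_)
    rw [tsum_fintype]
    refine le_trans (Finset.sum_le_sum fun i _ => hUb i) (le_of_eq ?_)
    rw [Finset.sum_const, Finset.card_univ, Fintype.card_fin, nsmul_eq_mul]
  have h2 : ENNReal.ofReal (lam⁻¹ * (Metric.diam (Set.univ : Set X)) ^ dH) ≤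
      μH[dH] (Set.univ : Set X) := by
    obtain x := Classical.arbitrary X
    exact le_trans (hreg x _ hdiam le_rfl).1 (measure_mono (subset_univ _))
  have h3 := h2.trans h1
  rw [show (coverN (Set.univ : Set X) σ : ℝ≥0∞) =
        ENNReal.ofReal (coverN (Set.univ : Set X) σ : ℝ) by rw [ENNReal.ofReal_natCast],
      ← ENNReal.ofReal_mul (by positivity)] at h3
  refine (ENNReal.ofReal_le_ofReal_iff ?_).1 h3
  have : (0:ℝ) ≤ (2*σ) ^ dH := (Real.rpow_pos_of_pos (by linarith) _).le
  positivity

end ahlfors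

section dims

open scoped ENNReal NNReal

set_option linter.unusedSectionVars false

variable {X : Type*} [MetricSpace X] [CompactSpace X]
  [MeasurableSpace X] [BorelSpace X]
  {dH lam : ℝ}

lemma eventually_Ioo {r : ℝ} (hr : 0 < r) : ∀ᶠ δ in 𝓝[>](0:ℝ), δ ∈ Set.Ioo (0:ℝ) r :=
  eventually_of_mem (Ioo_mem_nhdsGT_of_mem ⟨le_rfl, hr⟩) (fun x hx => hx)

lemma bf_nonneg {C : Set X} (hCne : C.Nonempty) :
    ∀ᶠ δ in 𝓝[>](0:ℝ), 0 ≤ Real.log (coverN C δ) / (-Real.log δ) := by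
  filter_upwards [eventually_Ioo one_pos] with δ hδ
  have h1 : (1:ℝ) ≤ (coverN C δ : ℝ) := by
    exact_mod_cast coverN_pos hCne hδ.1
  have h2 : Real.log δ < 0 := Real.log_neg hδ.1 hδ.2
  exact div_nonneg (Real.log_nonneg h1) (by linarith)

lemma coverN_univ_le_rpow (hdH : 0 ≤ dH) (hlam : 0 < lam)
    (hreg : ∀ (x : X) (ρ : ℝ), 0 < ρ → ρ ≤ Metric.diam (Set.univ : Set X) →
      ENNReal.ofReal (lam⁻¹ * ρ ^ dH) ≤ μH[dH] (Metric.ball x ρ) ∧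
      μH[dH] (Metric.ball x ρ) ≤ ENNReal.ofReal (lam * ρ ^ dH))
    (hdiam : 0 < Metric.diam (Set.univ : Set X)) :
    ∃ K : ℝ, 0 < K ∧ ∀ σ : ℝ, 0 < σ → σ ≤ Metric.diam (Set.univ : Set X) →
      (coverN (Set.univ : Set X) σ : ℝ) ≤ K * σ ^ (-dH) := by
  refine ⟨(μH[dH] (Set.univ : Set X)).toReal * lam * 4 ^ dH + 1, ?_, ?_⟩
  · have h4 : (0:ℝ) < 4 ^ dH := Real.rpow_pos_of_pos (by norm_num) _
    have : (0:ℝ) ≤ (μH[dH] (Set.univ : Set X)).toReal := ENNReal.toReal_nonneg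
    positivity
  · intro σ hσ hσd
    have key := coverN_univ_upper hlam hreg hσ hσd
    have hapos : (0:ℝ) < lam⁻¹ * (σ / 4) ^ dH := by
      have : (0:ℝ) < (σ / 4) ^ dH := Real.rpow_pos_of_pos (by linarith) _
      positivity
    rw [← le_div_iff₀ hapos] at key
    refine key.trans ?_
    have e1 : ((σ/4:ℝ)) ^ dH = σ ^ dH / 4 ^ dH := Real.div_rpow hσ.le (by norm_num) _
    have h4 : (0:ℝ) < 4 ^ dH := Real.rpow_pos_of_pos (by norm_num) _
    have hσdH : (0:ℝ) < σ ^ dH := Real.rpow_pos_of_pos hσ _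
    have e2 : σ ^ (-dH) = (σ ^ dH)⁻¹ := Real.rpow_neg hσ.le _
    rw [e1, e2]
    rw [div_le_iff₀ (by positivity)]
    have hT : (0:ℝ) ≤ (μH[dH] (Set.univ : Set X)).toReal := ENNReal.toReal_nonneg
    have expand : ((μH[dH] (Set.univ : Set X)).toReal * lam * 4 ^ dH + 1) * (σ ^ dH)⁻¹ *
        (lam⁻¹ * (σ ^ dH / 4 ^ dH)) =
        ((μH[dH] (Set.univ : Set X)).toReal + (lam⁻¹ * (4 ^ dH)⁻¹ )) := by
      field_simp
    rw [expand]
    have : (0:ℝ) < lam⁻¹ * (4 ^ dH)⁻¹ := by positivity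
    linarith

/-- eventual upper bound for the box-counting quotient, for any subset. -/
lemma bf_le_eventually (hdH : 0 ≤ dH) (hlam : 0 < lam)
    (hreg : ∀ (x : X) (ρ : ℝ), 0 < ρ → ρ ≤ Metric.diam (Set.univ : Set X) →
      ENNReal.ofReal (lam⁻¹ * ρ ^ dH) ≤ μH[dH] (Metric.ball x ρ) ∧
      μH[dH] (Metric.ball x ρ) ≤ ENNReal.ofReal (lam * ρ ^ dH))
    (hdiam : 0 < Metric.diam (Set.univ : Set X))
    (C : Set X) (hCne : C.Nonempty) {ε : ℝ} (hε : 0 < ε) :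
    ∀ᶠ δ in 𝓝[>](0:ℝ), Real.log (coverN C δ) / (-Real.log δ) ≤ dH + ε := by
  obtain ⟨K, hK, hKb⟩ := coverN_univ_le_rpow hdH hlam hreg hdiam
  set r : ℝ := min 1 (min (Metric.diam (Set.univ : Set X)) (Real.exp (-(|Real.log K| / ε + 1))))
  have hr : 0 < r := by
    refine lt_min one_pos (lt_min hdiam (Real.exp_pos _))
  filter_upwards [eventually_Ioo hr] with δ hδ
  obtain ⟨hδ0, hδr⟩ := hδ
  have hδ1 : δ < 1 := lt_of_lt_of_le hδr (min_le_left _ _)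
  have hδd : δ ≤ Metric.diam (Set.univ : Set X) :=
    le_trans hδr.le ((min_le_right _ _).trans (min_le_left _ _))
  have hδe : δ < Real.exp (-(|Real.log K| / ε + 1)) :=
    lt_of_lt_of_le hδr ((min_le_right _ _).trans (min_le_right _ _))
  have hL : 0 < -Real.log δ := by
    have := Real.log_neg hδ0 hδ1; linarith
  have hLe : |Real.log K| / ε + 1 < -Real.log δ := by
    have := (Real.log_lt_log hδ0 hδe)
    rw [Real.log_exp] at this
    linarith
  have hNpos : (1:ℝ) ≤ (coverN C δ : ℝ) := by exact_mod_cast coverN_pos hCne hδ0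
  have hNle : (coverN C δ : ℝ) ≤ K * δ ^ (-dH) := by
    refine le_trans ?_ (hKb δ hδ0 hδd)
    exact_mod_cast coverN_mono_set (subset_univ C) hδ0
  have hlogN : Real.log (coverN C δ) ≤ Real.log K + dH * (-Real.log δ) := by
    have h1 : Real.log (coverN C δ) ≤ Real.log (K * δ ^ (-dH)) :=
      Real.log_le_log (by linarith) hNle
    rw [Real.log_mul hK.ne' (Real.rpow_pos_of_pos hδ0 _).ne',
      Real.log_rpow hδ0] at h1
    linarith
  rw [div_le_iff₀ hL]
  have hlogK : Real.log K ≤ |Real.log K| := le_abs_self _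
  have habs : |Real.log K| ≤ ε * (-Real.log δ) := by
    rw [← div_le_iff₀' hε] at *
    nlinarith [abs_nonneg (Real.log K), hε.le, hL.le]
  nlinarith [hL]

lemma ubDim_le (hdH : 0 ≤ dH) (hlam : 0 < lam)
    (hreg : ∀ (x : X) (ρ : ℝ), 0 < ρ → ρ ≤ Metric.diam (Set.univ : Set X) →
      ENNReal.ofReal (lam⁻¹ * ρ ^ dH) ≤ μH[dH] (Metric.ball x ρ) ∧
      μH[dH] (Metric.ball x ρ) ≤ ENNReal.ofReal (lam * ρ ^ dH))
    (hdiam : 0 < Metric.diam (Set.univ : Set X))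
    (C : Set X) (hCne : C.Nonempty) : ubDim C ≤ dH := by
  refine le_of_forall_pos_le_add fun ε hε => ?_
  exact limsup_le_of_le
    ((isBoundedUnder_of_eventually_ge (bf_nonneg hCne)).isCoboundedUnder_le)
    (bf_le_eventually hdH hlam hreg hdiam C hCne hε)

lemma lbDim_nonneg (hdH : 0 ≤ dH) (hlam : 0 < lam)
    (hreg : ∀ (x : X) (ρ : ℝ), 0 < ρ → ρ ≤ Metric.diam (Set.univ : Set X) →
      ENNReal.ofReal (lam⁻¹ * ρ ^ dH) ≤ μH[dH] (Metric.ball x ρ) ∧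
      μH[dH] (Metric.ball x ρ) ≤ ENNReal.ofReal (lam * ρ ^ dH))
    (hdiam : 0 < Metric.diam (Set.univ : Set X))
    (C : Set X) (hCne : C.Nonempty) : 0 ≤ lbDim C :=
  le_liminf_of_le
    ((isBoundedUnder_of_eventually_le
      (bf_le_eventually hdH hlam hreg hdiam C hCne one_pos)).isCoboundedUnder_ge)
    (bf_nonneg hCne)

lemma ubDim_univ_ge (hdH : 0 ≤ dH) (hlam : 0 < lam)
    (hreg : ∀ (x : X) (ρ : ℝ), 0 < ρ → ρ ≤ Metric.diam (Set.univ : Set X) →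
      ENNReal.ofReal (lam⁻¹ * ρ ^ dH) ≤ μH[dH] (Metric.ball x ρ) ∧
      μH[dH] (Metric.ball x ρ) ≤ ENNReal.ofReal (lam * ρ ^ dH))
    (hdiam : 0 < Metric.diam (Set.univ : Set X)) [Nonempty X] :
    dH ≤ ubDim (Set.univ : Set X) := by
  refine le_of_forall_pos_le_add fun ε hε => ?_
  have hbdd : IsBoundedUnder (· ≤ ·) (𝓝[>](0:ℝ))
      (fun δ : ℝ => Real.log (coverN (Set.univ : Set X) δ) / (-Real.log δ)) :=
    isBoundedUnder_of_eventually_le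
      (bf_le_eventually hdH hlam hreg hdiam univ univ_nonempty one_pos)
  -- lower bound on covering numbers: coverN univ σ ≥ c * σ^(-dH)
  set c : ℝ := lam⁻¹ * (Metric.diam (Set.univ : Set X)) ^ dH / (lam * 2 ^ dH) with hc
  have hcpos : 0 < c := by
    have h1 : (0:ℝ) < (Metric.diam (Set.univ : Set X)) ^ dH := Real.rpow_pos_of_pos hdiam _
    have h2 : (0:ℝ) < (2:ℝ) ^ dH := Real.rpow_pos_of_pos (by norm_num) _
    positivity
  have hlow : ∀ σ : ℝ, 0 < σ → 2 * σ ≤ Metric.diam (Set.univ : Set X) →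
      c * σ ^ (-dH) ≤ (coverN (Set.univ : Set X) σ : ℝ) := by
    intro σ hσ hσd
    have key := coverN_univ_lower hlam hreg hσ hσd
    have h2σ : ((2*σ:ℝ)) ^ dH = 2 ^ dH * σ ^ dH := Real.mul_rpow (by norm_num) hσ.le
    have hb : (0:ℝ) < lam * (2 * σ) ^ dH := by
      have : (0:ℝ) < (2*σ) ^ dH := Real.rpow_pos_of_pos (by linarith) _
      positivity
    rw [← div_le_iff₀ hb] at key
    have he : lam⁻¹ * Metric.diam (Set.univ : Set X) ^ dH / (lam * (2 * σ) ^ dH)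
        = c * σ ^ (-dH) := by
      rw [hc, Real.rpow_neg hσ.le, h2σ]
      rw [show lam * (2 ^ dH * σ ^ dH) = lam * 2 ^ dH * σ ^ dH by ring, ← div_div,
        div_eq_mul_inv _ (σ ^ dH)]
    rw [← he]; exact key
  -- so the quotient is eventually ≥ dH - ε
  have hev : ∀ᶠ δ in 𝓝[>](0:ℝ), dH - ε ≤
      Real.log (coverN (Set.univ : Set X) δ) / (-Real.log δ) := by
    set r : ℝ := min 1 (min (Metric.diam (Set.univ : Set X) / 2)
      (Real.exp (-(|Real.log c| / ε + 1))))
    have hr : 0 < r := lt_min one_pos (lt_min (by linarith) (Real.exp_pos _))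
    filter_upwards [eventually_Ioo hr] with δ hδ
    obtain ⟨hδ0, hδr⟩ := hδ
    have hδ1 : δ < 1 := lt_of_lt_of_le hδr (min_le_left _ _)
    have hδd : 2 * δ ≤ Metric.diam (Set.univ : Set X) := by
      have := lt_of_lt_of_le hδr ((min_le_right _ _).trans (min_le_left _ _))
      linarith
    have hδe : δ < Real.exp (-(|Real.log c| / ε + 1)) :=
      lt_of_lt_of_le hδr ((min_le_right _ _).trans (min_le_right _ _))
    have hL : 0 < -Real.log δ := by
      have := Real.log_neg hδ0 hδ1; linarith
    have hLe : |Real.log c| / ε + 1 < -Real.log δ := by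
      have := Real.log_lt_log hδ0 hδe
      rw [Real.log_exp] at this
      linarith
    have hNge : c * δ ^ (-dH) ≤ (coverN (Set.univ : Set X) δ : ℝ) := hlow δ hδ0 hδd
    have hcd : (0:ℝ) < c * δ ^ (-dH) := by
      have : (0:ℝ) < δ ^ (-dH) := Real.rpow_pos_of_pos hδ0 _
      positivity
    have hlogN : Real.log c + dH * (-Real.log δ) ≤ Real.log (coverN (Set.univ : Set X) δ) := by
      have h1 : Real.log (c * δ ^ (-dH)) ≤ Real.log (coverN (Set.univ : Set X) δ) :=
        Real.log_le_log hcd hNge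
      rw [Real.log_mul hcpos.ne' (Real.rpow_pos_of_pos hδ0 _).ne',
        Real.log_rpow hδ0] at h1
      linarith
    rw [le_div_iff₀ hL]
    have hlogc : -|Real.log c| ≤ Real.log c := neg_abs_le _
    have habs : |Real.log c| ≤ ε * (-Real.log δ) := by
      have h2 : |Real.log c| / ε < -Real.log δ := by linarith
      rw [div_lt_iff₀ hε] at h2
      nlinarith [hL]
    nlinarith [hL]
  have := le_limsup_of_frequently_le (hev.mono fun δ h => h).frequently hbdd
  unfold ubDim
  linarith

end dims

section core

open scoped ENNReal NNReal

set_option linter.unusedSectionVars false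

variable {X : Type*} [MetricSpace X] [CompactSpace X]
  [MeasurableSpace X] [BorelSpace X]
  {dH lam : ℝ}

lemma cre_nonneg {C : Set X} (hCne : C.Nonempty) (t : ℝ) {δ : ℝ} (hδ : 0 < δ) :
    0 ≤ cre C t δ := by
  have h0 : (0:ℝ) ∈ {p : ℝ | 0 ≤ p ∧ p ≤ 1 ∧ δ ^ (-(p * t)) ≤ (coverN C (δ ^ p) : ℝ)} := by
    refine ⟨le_rfl, zero_le_one, ?_⟩
    simp only [zero_mul, neg_zero, Real.rpow_zero]
    exact_mod_cast coverN_pos hCne one_pos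
  exact le_csSup ⟨1, fun p hp => hp.2.1⟩ h0

lemma tendsto_rpow_pos {c : ℝ} (hc : 0 < c) :
    Tendsto (fun x : ℝ => x ^ c) (𝓝[>](0:ℝ)) (𝓝[>](0:ℝ)) := by
  rw [tendsto_nhdsWithin_iff]
  constructor
  · have h0 : ContinuousAt (fun x : ℝ => x ^ c) 0 :=
      Real.continuousAt_rpow_const 0 c (Or.inr hc.le)
    have := h0.tendsto
    rw [Real.zero_rpow hc.ne'] at this
    exact this.mono_left nhdsWithin_le_nhds
  · filter_upwards [eventually_mem_nhdsWithin] with x hx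
    exact Real.rpow_pos_of_pos hx c

set_option maxHeartbeats 1000000 in
/-- The key computation bounding the covering regularity exponent at scale `δ₀^(1/q)`. -/
lemma cre_le_core (hdH : 0 ≤ dH) (hlam : 0 < lam)
    (hreg : ∀ (x : X) (ρ : ℝ), 0 < ρ → ρ ≤ Metric.diam (Set.univ : Set X) →
      ENNReal.ofReal (lam⁻¹ * ρ ^ dH) ≤ μH[dH] (Metric.ball x ρ) ∧
      μH[dH] (Metric.ball x ρ) ≤ ENNReal.ofReal (lam * ρ ^ dH))
    (C : Set X) {t lb ε q δ₀ : ℝ}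
    (ht0 : 0 < t) (hlb0 : 0 ≤ lb) (hlbt : lb < t) (hε : 0 < ε) (hεt : ε < dH - t)
    (hq : q = (dH - t) / (dH - lb - ε) + ε)
    (hδ₀0 : 0 < δ₀) (hδ₀1 : δ₀ < 1)
    (hδ₀d : 2 * δ₀ ≤ Metric.diam (Set.univ : Set X))
    (hδ₀e : q * Real.log (lam ^ 2 * 8 ^ dH) / (ε * (dH - lb - ε)) < -Real.log δ₀)
    (hN : (coverN C δ₀ : ℝ) ≤ δ₀ ^ (-(lb + ε))) :
    cre C t (δ₀ ^ (1/q)) ≤ q * ((lb + ε) / t) := by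
  have htdH : t < dH := by linarith
  have hden : 0 < dH - lb - ε := by linarith
  have hq0 : 0 < q := by
    have : 0 < (dH - t) / (dH - lb - ε) := div_pos (by linarith) hden
    rw [hq]; linarith
  set δ : ℝ := δ₀ ^ (1/q) with hδdef
  have hδ0 : 0 < δ := Real.rpow_pos_of_pos hδ₀0 _
  have hδ1 : δ < 1 := Real.rpow_lt_one hδ₀0.le hδ₀1 (one_div_pos.2 hq0)
  have hδq : δ ^ q = δ₀ := by
    rw [hδdef, ← Real.rpow_mul hδ₀0.le, one_div_mul_cancel hq0.ne', Real.rpow_one]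
  have hlogδneg : Real.log δ < 0 := Real.log_neg hδ0 hδ1
  have hlogδ₀ : Real.log δ₀ = q * Real.log δ := by
    rw [← hδq, Real.log_rpow hδ0]
  clear_value δ
  have hKpos : (0:ℝ) < lam ^ 2 * 8 ^ dH := by
    have : (0:ℝ) < (8:ℝ) ^ dH := Real.rpow_pos_of_pos (by norm_num) _
    positivity
  refine Real.sSup_le ?_ (mul_nonneg hq0.le (div_nonneg (by linarith) ht0.le))
  rintro p ⟨hp0, hp1, hpN⟩
  by_cases hpq : p ≤ q
  · -- coarse scale: monotonicity of covering numbers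
    have hδpq : δ₀ ≤ δ ^ p := by
      rw [← hδq]; exact Real.rpow_le_rpow_of_exponent_ge hδ0 hδ1.le hpq
    have h2 : (coverN C (δ ^ p) : ℝ) ≤ (coverN C δ₀ : ℝ) := by
      exact_mod_cast coverN_anti hδ₀0 hδpq
    have h3 : δ ^ (-(p * t)) ≤ δ₀ ^ (-(lb + ε)) := le_trans hpN (h2.trans hN)
    have h4 := Real.log_le_log (Real.rpow_pos_of_pos hδ0 _) h3
    rw [Real.log_rpow hδ0, Real.log_rpow hδ₀0, hlogδ₀] at h4
    -- h4 : -(p*t) * log δ ≤ -(lb+ε) * (q * log δ)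
    have h5 : p * t ≤ (lb + ε) * q := by nlinarith [hlogδneg]
    rw [mul_comm q ((lb + ε)/t), div_mul_eq_mul_div, le_div_iff₀ ht0]
    linarith
  · -- fine scale: impossible by the interpolation bound
    exfalso
    push_neg at hpq
    have hσ0 : 0 < δ ^ p := Real.rpow_pos_of_pos hδ0 _
    have hσδ₀ : δ ^ p ≤ δ₀ := by
      rw [← hδq]; exact Real.rpow_le_rpow_of_exponent_ge hδ0 hδ1.le hpq.le
    have hint := coverN_interp hdH hlam hreg C hσ0 hσδ₀ hδ₀d
    have hratio : δ₀ / δ ^ p = δ ^ (q - p) := by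
      rw [← hδq, ← Real.rpow_sub hδ0]
    have hNn : (0:ℝ) ≤ lam ^ 2 * 8 ^ dH * (δ₀ / δ ^ p) ^ dH := by
      have : (0:ℝ) < (δ₀ / δ ^ p) ^ dH := Real.rpow_pos_of_pos (by positivity) _
      positivity
    have hbig : δ ^ (-(p * t)) ≤ δ₀ ^ (-(lb + ε)) * (lam ^ 2 * 8 ^ dH * (δ ^ (q - p)) ^ dH) := by
      rw [← hratio]
      refine hpN.trans (hint.trans ?_)
      exact mul_le_mul_of_nonneg_right hN hNn
    have hrpos : (0:ℝ) < (δ ^ (q - p)) ^ dH := Real.rpow_pos_of_pos (Real.rpow_pos_of_pos hδ0 _) _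
    have h6 := Real.log_le_log (Real.rpow_pos_of_pos hδ0 _) hbig
    rw [Real.log_rpow hδ0, Real.log_mul (Real.rpow_pos_of_pos hδ₀0 _).ne'
        (by positivity), Real.log_mul hKpos.ne' hrpos.ne',
      Real.log_rpow hδ₀0, Real.log_rpow (Real.rpow_pos_of_pos hδ0 _),
      Real.log_rpow hδ0, hlogδ₀] at h6
    -- h6 : -(p*t) * log δ ≤ -(lb+ε)*(q*log δ) + (log K₂ + (q-p)*dH * log δ)
    set w : ℝ := -Real.log δ with hw
    have hw0 : 0 < w := by rw [hw]; linarith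
    have hLδ : Real.log δ = -w := by rw [hw]; ring
    rw [hLδ] at h6
    have h7 : Real.log (lam ^ 2 * 8 ^ dH) < ε * (dH - lb - ε) * w := by
      rw [hlogδ₀, hLδ] at hδ₀e
      have hm : 0 < ε * (dH - lb - ε) := by positivity
      rw [div_lt_iff₀ hm] at hδ₀e
      -- hδ₀e : q * log K₂ < -(q * -w) * (ε * (dH-lb-ε))
      nlinarith [hδ₀e, hq0]
    have hqid : q * (dH - lb - ε) = (dH - t) + ε * (dH - lb - ε) := by
      rw [hq, add_mul, div_mul_cancel₀ _ hden.ne']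
    have hqidw : q * (dH - lb - ε) * w = ((dH - t) + ε * (dH - lb - ε)) * w := by
      rw [hqid]
    have hdtw : 0 < (dH - t) * w := mul_pos (by linarith) hw0
    have h9 : 0 < (p - 1) * ((dH - t) * w) := by nlinarith [h6, h7, hqidw]
    have hfinal : 1 < p := by nlinarith [h9, hdtw]
    linarith
end core

set_option maxHeartbeats 1000000 in
theorem creT_ahlfors_bound
    {X : Type*} [MetricSpace X] [CompactSpace X]
    [MeasurableSpace X] [BorelSpace X]
    (dH lam : ℝ) (hdH : 0 ≤ dH) (hlam : 0 < lam)
    (hdimX : dimH (Set.univ : Set X) = ENNReal.ofReal dH)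
    (hreg : ∀ (x : X) (ρ : ℝ), 0 < ρ → ρ ≤ Metric.diam (Set.univ : Set X) →
      ENNReal.ofReal (lam⁻¹ * ρ ^ dH) ≤ μH[dH] (Metric.ball x ρ) ∧
      μH[dH] (Metric.ball x ρ) ≤ ENNReal.ofReal (lam * ρ ^ dH))
    (C : Set X) (hC : IsCompact C) (hCne : C.Nonempty)
    (t : ℝ) (ht : t ∈ Set.Ioo (lbDim C) (ubDim C)) :
    creT C t ≤ (lbDim C / t) *
      ((ubDim (Set.univ : Set X) - t) / (ubDim (Set.univ : Set X) - lbDim C)) := by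
  obtain ⟨hlt, htub⟩ := ht
  have hXne : Nonempty X := ⟨hCne.choose⟩
  rcases le_or_gt (Metric.diam (Set.univ : Set X)) 0 with hd0 | hdiam
  · -- degenerate case: the space is a single point, contradiction with `ht`
    exfalso
    have hdeq : Metric.diam (Set.univ : Set X) = 0 := le_antisymm hd0 Metric.diam_nonneg
    have hcov1 : ∀ᶠ δ in 𝓝[>](0:ℝ),
        Real.log (coverN C δ) / (-Real.log δ) = (fun _ : ℝ => (0:ℝ)) δ := by
      filter_upwards [eventually_mem_nhdsWithin] with δ hδ
      have hδ0 : (0:ℝ) < δ := hδ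
      have h1 : coverN C δ ≤ 1 := by
        have hmem : 1 ∈ {n : ℕ | ∃ U : Fin n → Set X,
            (∀ i, EMetric.diam (U i) ≤ ENNReal.ofReal δ) ∧ C ⊆ ⋃ i, U i} := by
          refine ⟨fun _ => Set.univ, fun i => ?_, fun x _ => mem_iUnion.2 ⟨0, mem_univ x⟩⟩
          refine EMetric.diam_le fun x _ y _ => ?_
          rw [edist_dist]
          refine ENNReal.ofReal_le_ofReal ?_
          have := Metric.dist_le_diam_of_mem
            (isCompact_univ : IsCompact (Set.univ : Set X)).isBounded (mem_univ x) (mem_univ y)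
          rw [hdeq] at this
          linarith
        exact Nat.sInf_le hmem
      have h2 : 1 ≤ coverN C δ := coverN_pos hCne hδ0
      have he : coverN C δ = 1 := le_antisymm h1 h2
      rw [he]
      simp
    have hlb : lbDim C = 0 := by
      unfold lbDim
      rw [liminf_congr hcov1, liminf_const]
    have hub : ubDim C = 0 := by
      unfold ubDim
      rw [limsup_congr hcov1, limsup_const]
    rw [hlb] at hlt; rw [hub] at htub
    linarith
  -- main case
  have hub_le : ubDim (Set.univ : Set X) ≤ dH := ubDim_le hdH hlam hreg hdiam _ univ_nonempty
  have hubC_le : ubDim C ≤ dH := ubDim_le hdH hlam hreg hdiam C hCne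
  have hub_ge : dH ≤ ubDim (Set.univ : Set X) := ubDim_univ_ge hdH hlam hreg hdiam
  have hub_eq : ubDim (Set.univ : Set X) = dH := le_antisymm hub_le hub_ge
  have hlb0 : 0 ≤ lbDim C := lbDim_nonneg hdH hlam hreg hdiam C hCne
  have htdH : t < dH := lt_of_lt_of_le htub hubC_le
  have ht0 : 0 < t := lt_of_le_of_lt hlb0 hlt
  set lb := lbDim C with hlbdef
  rw [hub_eq]
  by_contra hcon
  push_neg at hcon
  have key : ∀ ε : ℝ, 0 < ε → ε < dH - t →
      creT C t ≤ ((dH - t) / (dH - lb - ε) + ε) * ((lb + ε) / t) := by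
    intro ε hε hεt
    set q : ℝ := (dH - t) / (dH - lb - ε) + ε with hqdef
    have hden : 0 < dH - lb - ε := by linarith
    have hq0 : 0 < q := by
      have : 0 < (dH - t) / (dH - lb - ε) := div_pos (by linarith) hden
      rw [hqdef]; linarith
    have hbdd : IsBoundedUnder (· ≤ ·) (𝓝[>](0:ℝ))
        (fun δ : ℝ => Real.log (coverN C δ) / (-Real.log δ)) :=
      isBoundedUnder_of_eventually_le (bf_le_eventually hdH hlam hreg hdiam C hCne one_pos)
    have hfreq : ∃ᶠ δ₀ in 𝓝[>](0:ℝ),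
        Real.log (coverN C δ₀) / (-Real.log δ₀) < lb + ε := by
      refine frequently_lt_of_liminf_lt hbdd.isCoboundedUnder_ge ?_
      have h : lbDim C < lb + ε := by rw [← hlbdef]; linarith
      exact h
    set m : ℝ := ε * (dH - lb - ε) with hmdef
    have hm : 0 < m := mul_pos hε hden
    set r : ℝ := min 1 (min (Metric.diam (Set.univ : Set X) / 2)
        (Real.exp (-(q * Real.log (lam ^ 2 * 8 ^ dH) / m + 1)))) with hrdef
    have hr : 0 < r := lt_min one_pos (lt_min (by linarith) (Real.exp_pos _))
    have hfreq2 := hfreq.and_eventually (eventually_Ioo hr)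
    have hcore : ∀ δ₀ : ℝ,
        (Real.log (coverN C δ₀) / (-Real.log δ₀) < lb + ε ∧ δ₀ ∈ Set.Ioo 0 r) →
        cre C t (δ₀ ^ (1/q)) ≤ q * ((lb + ε) / t) := by
      rintro δ₀ ⟨hflt, hδ₀0, hδ₀r⟩
      have hδ₀1 : δ₀ < 1 := lt_of_lt_of_le hδ₀r (min_le_left _ _)
      have hδ₀d : 2 * δ₀ ≤ Metric.diam (Set.univ : Set X) := by
        have := lt_of_lt_of_le hδ₀r ((min_le_right _ _).trans (min_le_left _ _))
        linarith
      have hδ₀e' : δ₀ < Real.exp (-(q * Real.log (lam ^ 2 * 8 ^ dH) / m + 1)) :=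
        lt_of_lt_of_le hδ₀r ((min_le_right _ _).trans (min_le_right _ _))
      have hL₀ : 0 < -Real.log δ₀ := by
        have := Real.log_neg hδ₀0 hδ₀1; linarith
      have hδ₀e : q * Real.log (lam ^ 2 * 8 ^ dH) / (ε * (dH - lb - ε)) < -Real.log δ₀ := by
        have h1 := Real.log_lt_log hδ₀0 hδ₀e'
        rw [Real.log_exp] at h1
        rw [← hmdef]
        linarith
      have hN : (coverN C δ₀ : ℝ) ≤ δ₀ ^ (-(lb + ε)) := by
        have hN1 : (1:ℝ) ≤ (coverN C δ₀ : ℝ) := by exact_mod_cast coverN_pos hCne hδ₀0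
        rw [div_lt_iff₀ hL₀] at hflt
        rw [Real.rpow_def_of_pos hδ₀0]
        refine (Real.log_le_iff_le_exp (by linarith)).1 ?_
        nlinarith [hflt]
      exact cre_le_core hdH hlam hreg C ht0 hlb0 hlt hε hεt hqdef hδ₀0 hδ₀1 hδ₀d hδ₀e hN
    have hfreq3 : ∃ᶠ δ in 𝓝[>](0:ℝ), cre C t δ ≤ q * ((lb + ε) / t) :=
      (tendsto_rpow_pos (one_div_pos.2 hq0)).frequently (hfreq2.mono fun δ₀ h => hcore δ₀ h)
    have hbddc : IsBoundedUnder (· ≥ ·) (𝓝[>](0:ℝ)) (fun δ : ℝ => cre C t δ) :=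
      isBoundedUnder_of_eventually_ge
        (eventually_mem_nhdsWithin.mono fun δ hδ => cre_nonneg hCne t hδ)
    have := liminf_le_of_frequently_le hfreq3 hbddc
    exact this
  -- pass to the limit ε → 0⁺
  have hBt : Tendsto (fun ε : ℝ => ((dH - t) / (dH - lb - ε) + ε) * ((lb + ε) / t))
      (𝓝[>](0:ℝ)) (𝓝 (((dH - t) / (dH - lb - 0) + 0) * ((lb + 0) / t))) := by
    refine Tendsto.mono_left ?_ nhdsWithin_le_nhds
    have h1 : ContinuousAt (fun ε : ℝ => dH - lb - ε) 0 := by fun_prop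
    have hne : dH - lb - 0 ≠ 0 := by
      rw [sub_zero]
      have : lb < dH := lt_trans hlt htdH
      linarith
    have h2 : ContinuousAt (fun ε : ℝ => (dH - t) / (dH - lb - ε)) 0 :=
      ContinuousAt.div continuousAt_const h1 hne
    exact ((h2.add continuousAt_id).mul
      ((continuousAt_const.add continuousAt_id).div_const t)).tendsto
  have hlim_val : ((dH - t) / (dH - lb - 0) + 0) * ((lb + 0) / t)
      = lb / t * ((dH - t) / (dH - lb)) := by
    rw [sub_zero, add_zero, add_zero]
    ring
  rw [hlim_val] at hBt
  have hevB := hBt.eventually_lt_const hcon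
  have hevsmall : ∀ᶠ ε in 𝓝[>](0:ℝ), ε < dH - t :=
    eventually_of_mem (Ioo_mem_nhdsGT_of_mem ⟨le_rfl, by linarith⟩) (fun x hx => hx.2)
  have hevpos : ∀ᶠ ε in 𝓝[>](0:ℝ), (0:ℝ) < ε := eventually_mem_nhdsWithin
  obtain ⟨ε, hB, hεs, hε0⟩ := (hevB.and (hevsmall.and hevpos)).exists
  have := key ε hε0 hεs
  linarith
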